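/- Let S be an exemplar string and suppose dist_TD(S, T) ≤ k. Then the number of maximal (S,T)-stable substrings of S is at most 2k + 1. -/

import Mathlib

open scoped Classical
variable {α : Type*}
/-- A single tandem duplication: `AXB ⇒ AXXB` with `X` nonempty. -/
def TDStep (S T : List α) : Prop :=
  ∃ A X B : List α, X ≠ [] ∧ S = A ++ X ++ B ∧ T = A ++ X ++ X ++ B

/-- `TDk k S T`: `T` is obtained from `S` by exactly `k` tandem duplications. -/
def TDk : ℕ → List α → List α → Prop
  | 0, S, T => S = T
  | n+1, S, T => ∃ U, TDStep S U ∧ TDk n U T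

/-- The tandem duplication distance, `⊤` if `T` is not reachable from `S`. -/
noncomputable def distTD (S T : List α) : ℕ∞ :=
  sInf {n : ℕ∞ | ∃ m : ℕ, n = m ∧ TDk m S T}

def pairs (l : List α) : List (α × α) := l.zip l.tail
@[simp] lemma pairs_nil : pairs ([] : List α) = [] := rfl
@[simp] lemma pairs_single (a : α) : pairs [a] = [] := rfl
@[simp] lemma pairs_cons_cons (a b : α) (l : List α) :
    pairs (a :: b :: l) = (a, b) :: pairs (b :: l) := rfl

lemma mem_pairs_fst {p : α × α} : ∀ {l : List α}, p ∈ pairs l → p.1 ∈ l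
  | [], h => by simp [pairs] at h
  | [a], h => by simp at h
  | a :: b :: l, h => by
    rw [pairs_cons_cons, List.mem_cons] at h
    rcases h with h | h
    · simp [h]
    · exact List.mem_cons_of_mem _ (mem_pairs_fst h)

lemma pairs_nodup : ∀ {l : List α}, l.Nodup → (pairs l).Nodup
  | [], _ => by simp
  | [a], _ => by simp
  | a :: b :: l, h => by
    rw [pairs_cons_cons, List.nodup_cons]
    refine ⟨fun hmem => ?_, pairs_nodup (List.Nodup.of_cons h)⟩
    have := mem_pairs_fst hmem
    simp only [List.nodup_cons] at h
    exact h.1 this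

lemma pairs_split (u : α) : ∀ (P V : List α),
    pairs (P ++ u :: V) = pairs (P ++ [u]) ++ pairs (u :: V)
  | [], V => by simp
  | [p], V => by simp
  | p :: q :: P, V => by
    have ih := pairs_split u (q :: P) V
    simp only [List.cons_append, pairs_cons_cons] at ih ⊢
    rw [ih]

lemma pairs_concat (c : α) : ∀ (l : List α), l ≠ [] →
    ∃ e, pairs (l ++ [c]) = pairs l ++ [e]
  | [], h => absurd rfl h
  | [a], _ => ⟨(a, c), by simp⟩
  | a :: b :: l, _ => by
    obtain ⟨e, he⟩ := pairs_concat c (b :: l) (by simp)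
    exact ⟨e, by simp only [List.cons_append, pairs_cons_cons] at he ⊢; rw [he]⟩

lemma pairs_prefix {p : α × α} (B : List α) : ∀ {l : List α}, p ∈ pairs l → p ∈ pairs (l ++ B)
  | [], h => by simp at h
  | [a], h => by simp at h
  | a :: b :: l, h => by
    rw [pairs_cons_cons, List.mem_cons] at h
    simp only [List.cons_append, pairs_cons_cons, List.mem_cons]
    rcases h with h | h
    · exact Or.inl h
    · exact Or.inr (pairs_prefix B h)

lemma mem_pairs_exists {p : α × α} : ∀ {l : List α}, p ∈ pairs l →
    ∃ A B, l = A ++ p.1 :: p.2 :: B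
  | [], h => by simp at h
  | [a], h => by simp at h
  | a :: b :: l, h => by
    rw [pairs_cons_cons, List.mem_cons] at h
    rcases h with h | h
    · subst h; exact ⟨[], l, rfl⟩
    · obtain ⟨A, B, hAB⟩ := mem_pairs_exists h
      exact ⟨a :: A, B, by rw [List.cons_append, ← hAB]⟩

lemma mem_pairs_of_split {x y : α} {l A B : List α} (h : l = A ++ x :: y :: B) :
    (x, y) ∈ pairs l := by
  subst h
  rw [pairs_split x A (y :: B)]
  simp

lemma nodup_split {x : α} : ∀ (A A' B B' : List α), (A ++ x :: B).Nodup →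
    A ++ x :: B = A' ++ x :: B' → A = A'
  | [], [], B, B', _, _ => rfl
  | [], a :: A', B, B', hnd, heq => by
    simp only [List.nil_append, List.cons_append, List.cons.injEq] at heq
    obtain ⟨rfl, heq⟩ := heq
    simp only [List.nil_append, List.nodup_cons] at hnd
    exact absurd (heq ▸ (by simp : x ∈ A' ++ x :: B')) hnd.1
  | a :: A, [], B, B', hnd, heq => by
    simp only [List.nil_append, List.cons_append, List.cons.injEq] at heq
    obtain ⟨rfl, heq⟩ := heq
    simp only [List.cons_append, List.nodup_cons] at hnd
    exact absurd (by simp : a ∈ A ++ a :: B) (heq ▸ hnd.1)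
  | a :: A, a' :: A', B, B', hnd, heq => by
    simp only [List.cons_append, List.cons.injEq] at heq
    obtain ⟨rfl, heq⟩ := heq
    simp only [List.cons_append, List.nodup_cons] at hnd
    rw [nodup_split A A' B B' hnd.2 heq]

lemma uniq_succ {S : List α} (hS : S.Nodup) {x y y' : α}
    (h1 : (x, y) ∈ pairs S) (h2 : (x, y') ∈ pairs S) : y = y' := by
  obtain ⟨A, B, hAB⟩ := mem_pairs_exists h1
  obtain ⟨A', B', hAB'⟩ := mem_pairs_exists h2
  simp only at hAB hAB'
  have heq : A ++ x :: (y :: B) = A' ++ x :: (y' :: B') := hAB ▸ hAB'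
  have hA : A = A' := nodup_split A A' _ _ (hAB ▸ hS) heq
  subst hA
  have := List.append_cancel_left heq
  simp only [List.cons.injEq] at this
  exact this.2.1

lemma uniq_pred {S : List α} (hS : S.Nodup) {w w' y : α}
    (h1 : (w, y) ∈ pairs S) (h2 : (w', y) ∈ pairs S) : w = w' := by
  obtain ⟨A, B, hAB⟩ := mem_pairs_exists h1
  obtain ⟨A', B', hAB'⟩ := mem_pairs_exists h2
  simp only at hAB hAB'
  have hAB2 : S = (A ++ [w]) ++ y :: B := by simp [hAB]
  have hAB2' : S = (A' ++ [w']) ++ y :: B' := by simp [hAB']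
  have heq : (A ++ [w]) ++ y :: B = (A' ++ [w']) ++ y :: B' := hAB2 ▸ hAB2'
  have hA : A ++ [w] = A' ++ [w'] := nodup_split _ _ _ _ (hAB2 ▸ hS) heq
  have := congrArg List.getLast? hA
  simpa [List.getLast?_concat] using this

lemma option_or_idem (o w : Option α) : o.or (o.or w) = o.or w := by
  cases o <;> simp

lemma TDStep_head? {S T : List α} (h : TDStep S T) : S.head? = T.head? := by
  obtain ⟨A, X, B, hX, rfl, rfl⟩ := h
  simp only [List.append_assoc, List.head?_append]
  rw [option_or_idem]

lemma TDStep_getLast? {S T : List α} (h : TDStep S T) : S.getLast? = T.getLast? := by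
  obtain ⟨A, X, B, hX, rfl, rfl⟩ := h
  simp only [List.append_assoc, List.getLast?_append]
  cases B.getLast? <;> cases X.getLast? <;> simp

lemma TDStep_pairs {S T : List α} (h : TDStep S T) :
    ∃ e, ∀ p ∈ pairs T, p ∈ pairs S ∨ p = e := by
  obtain ⟨A, X, B, hX, rfl, rfl⟩ := h
  obtain ⟨x, X', rfl⟩ := List.exists_cons_of_ne_nil hX
  obtain ⟨e, he⟩ := pairs_concat x (x :: X') (by simp)
  refine ⟨e, fun p hp => ?_⟩
  have hT : A ++ (x :: X') ++ (x :: X') ++ B = A ++ x :: (X' ++ x :: (X' ++ B)) := by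
    simp
  have hS : A ++ (x :: X') ++ B = A ++ x :: (X' ++ B) := by simp
  rw [hT, pairs_split x A,
    show x :: (X' ++ x :: (X' ++ B)) = (x :: X') ++ x :: (X' ++ B) from rfl,
    pairs_split x (x :: X') (X' ++ B), he] at hp
  rw [hS, pairs_split x A]
  simp only [List.mem_append] at hp ⊢
  rcases hp with hp | (hp | hp) | hp
  · exact Or.inl (Or.inl hp)
  · refine Or.inl (Or.inr ?_)
    have := pairs_prefix B hp
    simpa using this
  · exact Or.inr (by simpa using hp)
  · exact Or.inl (Or.inr hp)

lemma TDk_cover : ∀ (m : ℕ) (S T : List α), TDk m S T →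
    S.head? = T.head? ∧ S.getLast? = T.getLast? ∧
      ∃ F : Finset (α × α), F.card ≤ m ∧ ∀ p ∈ pairs T, p ∈ pairs S ∨ p ∈ F
  | 0, S, T, h => by
    cases (h : S = T)
    exact ⟨rfl, rfl, ∅, by simp, fun p hp => Or.inl hp⟩
  | n + 1, S, T, h => by
    obtain ⟨U, hSU, hUT⟩ := h
    obtain ⟨h1, h2, F, hF, hcov⟩ := TDk_cover n U T hUT
    obtain ⟨e, he⟩ := TDStep_pairs hSU
    refine ⟨(TDStep_head? hSU).trans h1, (TDStep_getLast? hSU).trans h2,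
      insert e F, ?_, fun p hp => ?_⟩
    · exact le_trans (Finset.card_insert_le _ _) (by omega)
    · rcases hcov p hp with hU | hFmem
      · rcases he p hU with hS | rfl
        · exact Or.inl hS
        · exact Or.inr (Finset.mem_insert_self _ _)
      · exact Or.inr (Finset.mem_insert_of_mem hFmem)

lemma splitBy_loop_length (R : α → α → Bool) :
    ∀ (t : List α) (a : α) (g : List α) (gs : List (List α)),
      (List.splitBy.loop R t a g gs).length
        = gs.length + 1 + (pairs (a :: t)).countP (fun p => !(R p.1 p.2))
  | [], a, g, gs => by simp [List.splitBy.loop]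
  | b :: t, a, g, gs => by
    have ih1 := splitBy_loop_length R t b (a :: g) gs
    have ih2 := splitBy_loop_length R t b [] (((a :: g).reverse) :: gs)
    cases hR : R a b with
    | true =>
      simp only [List.splitBy.loop, hR, pairs_cons_cons, List.countP_cons, hR,
        Bool.not_true, ih1]
      simp
    | false =>
      simp only [List.length_cons] at ih2
      simp only [List.splitBy.loop, hR, pairs_cons_cons, List.countP_cons, hR,
        Bool.not_false, ih2, List.length_cons]
      simp
      omega

lemma splitBy_length (R : α → α → Bool) (a : α) (t : List α) :
    (List.splitBy R (a :: t)).length = 1 + (pairs (a :: t)).countP (fun p => !(R p.1 p.2)) := by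
  have := splitBy_loop_length R t a [] []
  simpa [List.splitBy] using this

lemma distTD_le_exists {S T : List α} {k : ℕ} (h : distTD S T ≤ (k : ℕ∞)) :
    ∃ m : ℕ, m ≤ k ∧ TDk m S T := by
  by_contra hcon
  push_neg at hcon
  have : ((k : ℕ∞) + 1) ≤ distTD S T := by
    refine le_sInf fun b hb => ?_
    obtain ⟨m, rfl, hm⟩ := hb
    have : k < m := by
      by_contra hk
      exact absurd hm (hcon m (by omega))
    exact_mod_cast Nat.succ_le_of_lt this
  have h2 : (k : ℕ∞) + 1 ≤ (k : ℕ∞) := this.trans h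
  exact absurd (by exact_mod_cast h2 : k + 1 ≤ k) (by omega)

/-- The pair `xy` is stable in `T`: every occurrence of `x` in `T` is followed
by `y`, and every occurrence of `y` is preceded by `x`. -/
def StablePair (x y : α) (T : List α) : Prop :=
  (∀ A B : List α, T = A ++ x :: B → ∃ B', B = y :: B') ∧
  (∀ A B : List α, T = A ++ y :: B → ∃ A', A = A' ++ [x])

/-- The maximal `(S,T)`-stable substrings of `S`, obtained by splitting `S` at
every consecutive pair that is not stable in `T`. -/
noncomputable def blocks (S T : List α) : List (List α) :=
  S.splitBy (fun a b => decide (StablePair a b T))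

/-- The number of maximal `(S,T)`-stable substrings of a nonempty `S`: one more
than the number of consecutive pairs of `S` that are not stable in `T`. -/
noncomputable def numStable (S T : List α) : ℕ :=
  (blocks S T).length

lemma unstable_bound {S T : List α} (hS : S.Nodup) (m : ℕ)
    (hhead : S.head? = T.head?) (hlast : S.getLast? = T.getLast?)
    (F : Finset (α × α)) (hFcard : F.card ≤ m)
    (hcov : ∀ p ∈ pairs T, p ∈ pairs S ∨ p ∈ F) :
    ((pairs S).filter (fun p => !(decide (StablePair p.1 p.2 T)))).length ≤ 2 * m := by
  set Bad := (pairs S).filter (fun p => !(decide (StablePair p.1 p.2 T))) with hBad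
  have hBadnd : Bad.Nodup := (pairs_nodup hS).filter _
  rw [← List.toFinset_card_of_nodup hBadnd]
  classical
  set succf : α → α := fun u => if h : ∃ v, (u, v) ∈ pairs S then h.choose else u with hsuccf
  set predf : α → α := fun v => if h : ∃ u, (u, v) ∈ pairs S then h.choose else v with hpredf
  have hsub : Bad.toFinset ⊆
      F.image (fun e => (e.1, succf e.1)) ∪ F.image (fun e => (predf e.2, e.2)) := by
    intro q hq
    rw [List.mem_toFinset, hBad, List.mem_filter] at hq
    obtain ⟨x, y⟩ := q
    obtain ⟨hxy, hns⟩ := hq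
    simp only [Bool.not_eq_true', decide_eq_false_iff_not] at hns
    have hsuccx : succf x = y := by
      have hex : ∃ v, (x, v) ∈ pairs S := ⟨y, hxy⟩
      simp only [hsuccf]
      rw [dif_pos hex]
      exact uniq_succ hS hex.choose_spec hxy
    have hpredy : predf y = x := by
      have hex : ∃ u, (u, y) ∈ pairs S := ⟨x, hxy⟩
      simp only [hpredf]
      rw [dif_pos hex]
      exact uniq_pred hS hex.choose_spec hxy
    rw [StablePair, not_and_or] at hns
    rcases hns with hns | hns
    · push_neg at hns
      obtain ⟨A, B, hT, hB⟩ := hns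
      cases B with
      | nil =>
        exfalso
        have hx_last : S.getLast? = some x := by
          rw [hlast, hT, List.getLast?_concat]
        obtain ⟨A0, B0, hS0⟩ := mem_pairs_exists hxy
        simp only at hS0
        rw [hS0, show A0 ++ x :: y :: B0 = (A0 ++ [x]) ++ y :: B0 by simp,
          List.getLast?_append, List.getLast?_eq_getLast (l := y :: B0) (by simp),
          Option.some_or] at hx_last
        have hxmem : x ∈ y :: B0 := by
          rw [show x = (y :: B0).getLast (by simp) from (Option.some_injective _ hx_last.symm)]
          exact List.getLast_mem _
        have := hS0 ▸ hS
        have hnd2 := this.of_append_right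
        rw [List.nodup_cons] at hnd2
        exact hnd2.1 hxmem
      | cons z B' =>
        have hzy : z ≠ y := fun hzy => hB B' (by rw [hzy])
        have hmem : (x, z) ∈ pairs T := mem_pairs_of_split hT
        rcases hcov _ hmem with hmem | hmem
        · exact absurd (uniq_succ hS hmem hxy) hzy
        · refine Finset.mem_union_left _ (Finset.mem_image.mpr ⟨(x, z), hmem, ?_⟩)
          simp [hsuccx]
    · push_neg at hns
      obtain ⟨A, B, hT, hA⟩ := hns
      rcases List.eq_nil_or_concat A with rfl | ⟨A', w, rfl⟩
      · exfalso
        have hy_head : S.head? = some y := by rw [hhead, hT]; rfl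
        obtain ⟨A0, B0, hS0⟩ := mem_pairs_exists hxy
        simp only at hS0
        have hS0' : S = (A0 ++ [x]) ++ y :: B0 := by simp [hS0]
        rw [hS0', List.head?_append, List.head?_eq_head (l := A0 ++ [x]) (by simp),
          Option.some_or] at hy_head
        have hymem : y ∈ A0 ++ [x] := by
          rw [show y = (A0 ++ [x]).head (by simp) from (Option.some_injective _ hy_head.symm)]
          exact List.head_mem _
        have hdisj := List.disjoint_of_nodup_append (hS0' ▸ hS)
        exact hdisj hymem (by simp)
      · have hwx : w ≠ x := fun hwx => hA A' (by simp [hwx])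
        have hT' : T = A' ++ w :: y :: B := by simp [hT]
        have hmem : (w, y) ∈ pairs T := mem_pairs_of_split hT'
        rcases hcov _ hmem with hmem | hmem
        · exact absurd (uniq_pred hS hmem hxy) hwx
        · refine Finset.mem_union_right _ (Finset.mem_image.mpr ⟨(w, y), hmem, ?_⟩)
          simp [hpredy]
  calc Bad.toFinset.card ≤ _ := Finset.card_le_card hsub
    _ ≤ (F.image (fun e => (e.1, succf e.1))).card
        + (F.image (fun e => (predf e.2, e.2))).card := Finset.card_union_le _ _
    _ ≤ F.card + F.card := Nat.add_le_add (Finset.card_image_le) (Finset.card_image_le)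
    _ ≤ 2 * m := by omega

/-- If `S` is exemplar and `dist_TD(S,T) ≤ k`, then `S` has at most `2k + 1`
maximal `(S,T)`-stable substrings. -/
theorem stmt12 (S T : List α) (hS : S.Nodup) (k : ℕ)
    (h : distTD S T ≤ (k : ℕ∞)) :
    numStable S T ≤ 2 * k + 1 := by
  obtain ⟨m, hmk, hTD⟩ := distTD_le_exists h
  obtain ⟨hhead, hlast, F, hFcard, hcov⟩ := TDk_cover m S T hTD
  cases S with
  | nil => simp [numStable, blocks, List.splitBy]
  | cons a s =>
    rw [numStable, blocks, splitBy_length]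
    have hb := unstable_bound hS m hhead hlast F hFcard hcov
    rw [List.countP_eq_length_filter]
    omega
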